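/- Let Λ be a left hereditary ring. The class of stable left Λ-modules is closed under extensions: if 0 → A → B → C → 0 is a short exact sequence of left Λ-modules with A and C stable, then B is stable. -/

import Mathlib

universe u

/-- A module is *stable* if it has no nonzero projective direct summand. -/
def IsStableModule (Λ : Type u) [Ring Λ] (M : Type u) [AddCommGroup M] [Module Λ M] : Prop :=
  ∀ p : Submodule Λ M, Module.Projective Λ p → (∃ q, IsCompl p q) → p = ⊥

section Aux

open CategoryTheory

variable (Λ : Type u) [Ring Λ]

/-- Every module embeds into an injective module. -/
lemma exists_embed_injective (K : Type u) [AddCommGroup K] [Module Λ K] :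
    ∃ (E : Type u) (_ : AddCommGroup E) (_ : Module Λ E) (e : K →ₗ[Λ] E),
      Function.Injective e ∧ Module.Injective Λ E := by
  let J := Injective.under (ModuleCat.of Λ K)
  have hmono : Mono (Injective.ι (ModuleCat.of Λ K)) := inferInstance
  refine ⟨J, inferInstance, inferInstance, (Injective.ι (ModuleCat.of Λ K)).hom, ?_, ?_⟩
  · exact (ModuleCat.mono_iff_injective _).mp hmono
  · exact Module.injective_module_of_injective_object Λ J
      (inj := Injective.of_iso (Iso.refl _) (Injective.injective_under (ModuleCat.of Λ K)))

/-- Over a left hereditary ring, quotients of injective modules are injective. -/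
lemma injective_quotient (hHered : ∀ I : Ideal Λ, Module.Projective Λ I)
    (E : Type u) [AddCommGroup E] [Module Λ E] (hE : Module.Injective Λ E)
    (K' : Submodule Λ E) : Module.Injective Λ (E ⧸ K') := by
  apply Module.Baer.injective
  intro I gI
  haveI := hHered I
  obtain ⟨ψ, hψ⟩ := Module.projective_lifting_property K'.mkQ gI K'.mkQ_surjective
  obtain ⟨Ψ, hΨ⟩ := hE.out I.subtype (Submodule.injective_subtype I) ψ
  refine ⟨K'.mkQ ∘ₗ Ψ, fun x mem => ?_⟩
  have h1 := hΨ ⟨x, mem⟩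
  have h2 := LinearMap.congr_fun hψ (⟨x, mem⟩ : I)
  simp only [LinearMap.comp_apply, Submodule.subtype_apply] at h1 h2 ⊢
  rw [h1, h2]

/-- Over a left hereditary ring, a submodule of a projective module is projective. -/
lemma projective_submodule (hHered : ∀ I : Ideal Λ, Module.Projective Λ I)
    (P : Type u) [AddCommGroup P] [Module Λ P] (hP : Module.Projective Λ P)
    (X : Submodule Λ P) : Module.Projective Λ X := by
  classical
  -- the free cover of `X`
  set ρ : (X →₀ Λ) →ₗ[Λ] X := Finsupp.linearCombination Λ id with hρdef
  have hρ : Function.Surjective ρ := fun x => ⟨Finsupp.single x 1, by simp [hρdef]⟩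
  set K : Submodule Λ (X →₀ Λ) := LinearMap.ker ρ with hK
  -- embed the kernel into an injective module
  obtain ⟨E, _, _, e, he, hE⟩ := exists_embed_injective Λ K
  -- extend `e` to `h` on all of the free module
  obtain ⟨h, hh⟩ := hE.out (X := K) (Y := X →₀ Λ) K.subtype (Submodule.injective_subtype K) e
  set K' : Submodule Λ E := LinearMap.range e with hK'
  set q : (X →₀ Λ) →ₗ[Λ] E ⧸ K' := K'.mkQ ∘ₗ h with hq
  have hqK : K ≤ LinearMap.ker q := by
    intro m hm
    have : h m = e ⟨m, hm⟩ := hh ⟨m, hm⟩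
    simp only [hq, LinearMap.mem_ker, LinearMap.comp_apply, this]
    exact (Submodule.Quotient.mk_eq_zero K').mpr ⟨⟨m, hm⟩, rfl⟩
  -- `q` descends to the quotient, and the quotient embeds into `P`
  set qbar : ((X →₀ Λ) ⧸ K) →ₗ[Λ] E ⧸ K' := K.liftQ q hqK with hqbar
  set j : ((X →₀ Λ) ⧸ K) →ₗ[Λ] P := K.liftQ (X.subtype ∘ₗ ρ) (by
    intro m hm
    simp only [LinearMap.mem_ker, LinearMap.comp_apply]
    rw [show ρ m = 0 from hm]; rfl) with hj
  have hjinj : Function.Injective j := by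
    rw [← LinearMap.ker_eq_bot]
    apply Submodule.ker_liftQ_eq_bot
    intro m hm
    simp only [LinearMap.mem_ker, LinearMap.comp_apply, Submodule.subtype_apply] at hm
    exact (Submodule.coe_eq_zero).mp hm
  -- `E ⧸ K'` is injective since Λ is hereditary
  have hEK' : Module.Injective Λ (E ⧸ K') := injective_quotient Λ hHered E hE K'
  obtain ⟨H, hH⟩ := hEK'.out j hjinj qbar
  -- lift `H` through the quotient map using projectivity of `P`
  haveI := hP
  obtain ⟨Ht, hHt⟩ := Module.projective_lifting_property K'.mkQ H K'.mkQ_surjective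
  -- the retraction of `K ↪ X →₀ Λ`
  set σ : (X →₀ Λ) →ₗ[Λ] E := h - Ht ∘ₗ X.subtype ∘ₗ ρ with hσ
  have hσK' : ∀ m, σ m ∈ K' := by
    intro m
    have h1 : K'.mkQ (σ m) = q m - H (j (Submodule.Quotient.mk m)) := by
      simp only [hσ, hj, hq, LinearMap.sub_apply, LinearMap.comp_apply, map_sub,
        Submodule.liftQ_apply]
      congr 1
      rw [← hHt]; rfl
    have h2 : H (j (Submodule.Quotient.mk m)) = q m := by
      rw [hH (Submodule.Quotient.mk m), hqbar, Submodule.liftQ_apply]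
    have h3 : K'.mkQ (σ m) = 0 := by rw [h1, h2, sub_self]
    rw [Submodule.mkQ_apply] at h3
    exact (Submodule.Quotient.mk_eq_zero K').mp h3
  set eEquiv : K ≃ₗ[Λ] K' := LinearEquiv.ofInjective e he with heE
  set τ : (X →₀ Λ) →ₗ[Λ] K := eEquiv.symm.toLinearMap ∘ₗ (σ.codRestrict K' hσK') with hτ
  have hτK : ∀ k : K, τ (k : X →₀ Λ) = k := by
    intro k
    have hρk : ρ (k : X →₀ Λ) = 0 := k.2
    have hσk : σ (k : X →₀ Λ) = e k := by
      have h5 := hh k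
      simp only [Submodule.subtype_apply] at h5
      simp [hσ, hρk, h5]
    have : (σ.codRestrict K' hσK') (k : X →₀ Λ) = eEquiv k := by
      apply Subtype.ext
      simp only [LinearMap.codRestrict_apply, hσk, heE]
      rfl
    simp only [hτ, LinearMap.comp_apply, this, LinearEquiv.coe_coe, LinearEquiv.symm_apply_apply]
  -- `K` is a direct summand; its complement maps isomorphically onto `X`
  have hcompl : IsCompl K (LinearMap.ker τ) := LinearMap.isCompl_of_proj hτK
  set ρ₀ : (LinearMap.ker τ) →ₗ[Λ] X := ρ ∘ₗ (LinearMap.ker τ).subtype with hρ₀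
  have hρ₀inj : Function.Injective ρ₀ := by
    intro m m' hmm'
    apply Subtype.ext
    have hk : ((m : X →₀ Λ) - (m' : X →₀ Λ)) ∈ K := by
      simp only [hK, LinearMap.mem_ker, map_sub]
      simp only [hρ₀, LinearMap.comp_apply, Submodule.subtype_apply] at hmm'
      rw [hmm', sub_self]
    have hker : ((m : X →₀ Λ) - (m' : X →₀ Λ)) ∈ LinearMap.ker τ := by
      rw [LinearMap.mem_ker, map_sub]
      have : τ (m : X →₀ Λ) = 0 := m.2
      have h' : τ (m' : X →₀ Λ) = 0 := m'.2
      rw [this, h', sub_self]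
    have hz : τ ((m : X →₀ Λ) - (m' : X →₀ Λ)) = 0 := hker
    have h0 : (⟨(m : X →₀ Λ) - (m' : X →₀ Λ), hk⟩ : K) = 0 := by
      rw [← hτK ⟨(m : X →₀ Λ) - (m' : X →₀ Λ), hk⟩]
      exact hz
    have h6 := congrArg (fun z : K => (z : X →₀ Λ)) h0
    simpa [sub_eq_zero] using h6
  have hρ₀surj : Function.Surjective ρ₀ := by
    intro x
    obtain ⟨m, hm⟩ := hρ x
    have hτm : τ ((m : X →₀ Λ) - ((τ m : K) : X →₀ Λ)) = 0 := by
      rw [map_sub, hτK (τ m), sub_self]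
    refine ⟨⟨_, hτm⟩, ?_⟩
    have hρτ : ρ ((τ m : K) : X →₀ Λ) = 0 := (τ m).2
    simp only [hρ₀, LinearMap.comp_apply, Submodule.subtype_apply, map_sub, hρτ, sub_zero, hm]
  set eq₀ : (LinearMap.ker τ) ≃ₗ[Λ] X := LinearEquiv.ofBijective ρ₀ ⟨hρ₀inj, hρ₀surj⟩ with heq₀
  -- conclude with the splitting
  refine Module.Projective.of_split ((LinearMap.ker τ).subtype ∘ₗ eq₀.symm.toLinearMap) ρ ?_
  ext x
  have : ρ₀ (eq₀.symm x) = x := by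
    have := eq₀.apply_symm_apply x
    exact this
  exact congrArg Subtype.val this

end Aux

/-- Over a left hereditary ring, the class of stable modules is
closed under extensions. -/
theorem isStable_of_extension
    (Λ : Type u) [Ring Λ]
    (hHered : ∀ I : Ideal Λ, Module.Projective Λ I)
    (A B C : Type u) [AddCommGroup A] [Module Λ A]
    [AddCommGroup B] [Module Λ B] [AddCommGroup C] [Module Λ C]
    (f : A →ₗ[Λ] B) (g : B →ₗ[Λ] C)
    (hf : Function.Injective f) (hg : Function.Surjective g)
    (hex : Function.Exact f g)
    (hA : IsStableModule Λ A) (hC : IsStableModule Λ C) :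
    IsStableModule Λ B := by
  intro p hp ⟨q, hpq⟩
  -- Step 1: show the image of `A` misses `p`, i.e. `range f ≤ q`.
  set π : B →ₗ[Λ] p := Submodule.linearProjOfIsCompl p q hpq with hπ
  set ρA : A →ₗ[Λ] p := π ∘ₗ f with hρA
  set X : Submodule Λ p := LinearMap.range ρA with hX
  have hXproj : Module.Projective Λ X := projective_submodule Λ hHered p hp X
  set ρ' : A →ₗ[Λ] X := ρA.rangeRestrict with hρ'
  have hρ'surj : Function.Surjective ρ' := LinearMap.surjective_rangeRestrict ρA
  haveI := hXproj
  obtain ⟨s, hs⟩ := Module.projective_lifting_property ρ' LinearMap.id hρ'surj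
  have hsec : ∀ x : X, ρ' (s x) = x := fun x => LinearMap.congr_fun hs x
  have hsinj : Function.Injective s := fun x y hxy => by
    rw [← hsec x, ← hsec y, hxy]
  have hsproj : Module.Projective Λ (LinearMap.range s) :=
    Module.Projective.of_equiv (LinearEquiv.ofInjective s hsinj)
  set r : A →ₗ[Λ] (LinearMap.range s) :=
    (LinearEquiv.ofInjective s hsinj).toLinearMap ∘ₗ ρ' with hr
  have hrid : ∀ x : (LinearMap.range s), r (x : A) = x := by
    rintro ⟨-, y, rfl⟩
    apply Subtype.ext
    simp only [hr, LinearMap.comp_apply, hsec y, LinearEquiv.coe_coe,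
      LinearEquiv.ofInjective_apply]
  have hbot : LinearMap.range s = ⊥ := hA _ hsproj ⟨_, LinearMap.isCompl_of_proj hrid⟩
  have hXbot : ∀ x : X, x = 0 := by
    intro x
    have h1 : s x ∈ LinearMap.range s := ⟨x, rfl⟩
    rw [hbot, Submodule.mem_bot] at h1
    rw [← hsec x, h1, map_zero]
  have hπf : ∀ a, π (f a) = 0 := by
    intro a
    have : ρ' a = 0 := hXbot (ρ' a)
    have h2 : ((ρ' a : X) : p) = ρA a := rfl
    rw [this] at h2
    simpa [hρA] using h2.symm
  have hrange : LinearMap.ker g ≤ q := by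
    rw [hex.linearMap_ker_eq]
    rintro - ⟨a, rfl⟩
    rw [← Submodule.linearProjOfIsCompl_apply_eq_zero_iff (h := hpq)]
    exact hπf a
  -- Step 2: `g` maps `p` isomorphically to a direct summand of `C`.
  set γ : p →ₗ[Λ] C := g ∘ₗ p.subtype with hγ
  have hγinj : Function.Injective γ := by
    intro b b' hbb'
    apply Subtype.ext
    have hk : ((b : B) - (b' : B)) ∈ LinearMap.ker g := by
      rw [LinearMap.mem_ker, map_sub, sub_eq_zero]
      exact hbb'
    have hq' : ((b : B) - (b' : B)) ∈ q := hrange hk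
    have hp' : ((b : B) - (b' : B)) ∈ p := sub_mem b.2 b'.2
    have : ((b : B) - (b' : B)) ∈ p ⊓ q := ⟨hp', hq'⟩
    rw [hpq.inf_eq_bot, Submodule.mem_bot] at this
    exact sub_eq_zero.mp this
  have hYproj : Module.Projective Λ (LinearMap.range γ) :=
    Module.Projective.of_equiv (LinearEquiv.ofInjective γ hγinj)
  set Z : Submodule Λ C := Submodule.map g q with hZ
  have hrangeγ : LinearMap.range γ = Submodule.map g p := by
    rw [hγ, LinearMap.range_comp, Submodule.range_subtype]
  have hcompl : IsCompl (LinearMap.range γ) Z := by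
    constructor
    · rw [disjoint_iff]
      apply eq_bot_iff.mpr
      rintro c ⟨⟨b₁, rfl⟩, hcZ⟩
      obtain ⟨b₂, hb₂q, hb₂⟩ := hcZ
      have hk : ((b₁ : B) - b₂) ∈ LinearMap.ker g := by
        rw [LinearMap.mem_ker, map_sub, sub_eq_zero]
        exact hb₂.symm
      have hb₁q : (b₁ : B) ∈ q := by
        have := hrange hk
        have h2 : (b₁ : B) = ((b₁ : B) - b₂) + b₂ := (sub_add_cancel _ _).symm
        rw [h2]; exact add_mem this hb₂q
      have : (b₁ : B) ∈ p ⊓ q := ⟨b₁.2, hb₁q⟩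
      rw [hpq.inf_eq_bot, Submodule.mem_bot] at this
      simp [hγ, this]
    · rw [codisjoint_iff, hrangeγ, hZ, ← Submodule.map_sup, hpq.sup_eq_top,
        Submodule.map_top, LinearMap.range_eq_top.mpr hg]
  have hYbot : LinearMap.range γ = ⊥ := hC _ hYproj ⟨Z, hcompl⟩
  -- Step 3: conclude `p = ⊥`.
  have hpq' : p ≤ q := by
    intro b hb
    have : γ ⟨b, hb⟩ ∈ LinearMap.range γ := ⟨⟨b, hb⟩, rfl⟩
    rw [hYbot, Submodule.mem_bot] at this
    exact hrange (by simpa [hγ] using this)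
  exact hpq.disjoint.eq_bot_of_le hpq'
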